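/- For real a, b with a, b > 0 and a + b < 1 + min(a,b) (ensuring convergence), and for real α with α + 1 > 0: (a·b/(α+1)) · ₃F₂(a+1, b+1, 1; α+2, 2; 1) = (1/(α+1))·Γ(α+2)Γ(α−a−b+1)/(Γ(α−a+1)Γ(α−b+1)) − 1, whenever α+1−a−b > 0 and none of the Gamma arguments is a non-positive integer. -/

import Mathlib

noncomputable def poch (a : ℝ) (n : ℕ) : ℝ := (ascPochhammer ℝ n).eval a

/-- Generalized hypergeometric series ₃F₂(a,b,c; d,e; x). -/
noncomputable def F32 (a b c d e x : ℝ) : ℝ :=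
  ∑' n : ℕ, (poch a n * poch b n * poch c n) / (poch d n * poch e n * (n.factorial : ℝ)) * x ^ n

/-- `x` is not a non-positive integer. -/
def NotNonposInt (x : ℝ) : Prop := ∀ m : ℕ, x ≠ -(m : ℝ)

section Helpers

open MeasureTheory Set

lemma poch_zero (a : ℝ) : poch a 0 = 1 := by simp [poch]

lemma poch_succ (a : ℝ) (n : ℕ) : poch a (n + 1) = poch a n * (a + n) := by
  simp [poch, ascPochhammer_succ_right, Polynomial.eval_mul]

lemma poch_succ_left (a : ℝ) (n : ℕ) : poch a (n + 1) = a * poch (a + 1) n := by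
  simp [poch, ascPochhammer_succ_left, Polynomial.eval_comp]

lemma poch_pos {a : ℝ} (ha : 0 < a) (n : ℕ) : 0 < poch a n := by
  induction n with
  | zero => simp [poch_zero]
  | succ n ih => rw [poch_succ]; positivity

lemma poch_one (n : ℕ) : poch 1 n = n.factorial := by
  induction n with
  | zero => simp [poch_zero]
  | succ n ih => rw [poch_succ, ih, Nat.factorial_succ]; push_cast; ring

lemma poch_two (n : ℕ) : poch 2 n = (n + 1).factorial := by
  have h := poch_succ_left 1 n
  rw [poch_one] at h
  norm_num at h
  rw [← h]

lemma Gamma_add_nat {x : ℝ} (hx : 0 < x) (n : ℕ) :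
    Real.Gamma (x + n) = poch x n * Real.Gamma x := by
  induction n with
  | zero => simp [poch_zero]
  | succ n ih =>
    have hxn : x + n ≠ 0 := by positivity
    have : x + (n + 1 : ℕ) = (x + n) + 1 := by push_cast; ring
    rw [this, Real.Gamma_add_one hxn, ih, poch_succ]; ring

open Filter in
lemma summable_S1 {a x : ℝ} (ha : 0 < a) (hx : |x| < 1) :
    Summable (fun m : ℕ => poch a m / m.factorial * x ^ m) := by
  set r : ℝ := (|x| + 1) / 2 with hr
  have hxr : |x| < r := by rw [hr]; linarith
  have hr1 : r < 1 := by rw [hr]; linarith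
  apply summable_of_ratio_norm_eventually_le hr1
  have htend : Tendsto (fun m : ℕ => (a + m) / (m + 1) * |x|) atTop (nhds |x|) := by
    have h1 : Tendsto (fun m : ℕ => (a + m) / (m + 1)) atTop (nhds 1) := by
      have : (fun m : ℕ => (a + m) / (m + 1)) =
          fun m : ℕ => (a / (m + 1) + m / (m+1)) := by
        funext m; rw [← add_div]
      rw [this]
      have hz : Tendsto (fun m : ℕ => a / (m + 1)) atTop (nhds 0) := by
        apply Tendsto.div_atTop tendsto_const_nhds
        exact tendsto_natCast_atTop_atTop.atTop_add tendsto_const_nhds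
      have ho : Tendsto (fun m : ℕ => (m : ℝ) / (m + 1)) atTop (nhds 1) := by
        simpa using tendsto_natCast_div_add_atTop (1 : ℝ)
      simpa using hz.add ho
    simpa using h1.mul_const |x|
  filter_upwards [htend.eventually_le_const hxr] with m hm
  have hfp : (0:ℝ) < m.factorial := by positivity
  have hfp1 : (0:ℝ) < (m+1).factorial := by positivity
  have hpp := poch_pos ha m
  have hkey : ‖poch a (m+1) / (m+1).factorial * x ^ (m+1)‖
      = ((a + m) / (m + 1) * |x|) * ‖poch a m / m.factorial * x ^ m‖ := by
    rw [poch_succ, Nat.factorial_succ, pow_succ]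
    simp only [norm_mul, norm_div, Real.norm_eq_abs]
    rw [abs_of_pos hpp, abs_of_pos (by positivity : (0:ℝ) < a + (m:ℝ)),
      abs_of_pos (by positivity : (0:ℝ) < (m.factorial:ℝ)),
      abs_of_pos (by positivity : (0:ℝ) < (((m+1) * m.factorial : ℕ):ℝ))]
    have ham : 0 < a + (m:ℝ) := by positivity
    push_cast
    simp only [div_eq_mul_inv, mul_inv]
    ring
  rw [hkey]
  have hnn : (0:ℝ) ≤ ‖poch a m / m.factorial * x ^ m‖ := norm_nonneg _
  exact mul_le_mul_of_nonneg_right hm hnn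

lemma summable_S3 {a x : ℝ} (ha : 0 < a) (hx : |x| < 1) :
    Summable (fun m : ℕ => poch a m / m.factorial * ((a + m) * x ^ m)) := by
  have h := (summable_S1 (by linarith : (0:ℝ) < a + 1) hx).mul_left a
  refine h.congr fun m => ?_
  have : a * poch (a+1) m = poch a m * (a + m) := by
    rw [← poch_succ_left, poch_succ]
  field_simp
  rw [this]
  ring

lemma summable_S4 {a x : ℝ} (ha : 0 < a) (hx : |x| < 1) :
    Summable (fun m : ℕ => poch a m / m.factorial * (m * x ^ m)) := by
  have habs : |(|x|)| < 1 := by rwa [abs_abs]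
  refine Summable.of_norm_bounded (summable_S3 ha habs) fun m => ?_
  have hp := (poch_pos ha m).le
  have hf : (0:ℝ) ≤ (m.factorial:ℝ)⁻¹ := by positivity
  rw [Real.norm_eq_abs, abs_mul, abs_mul, abs_div, abs_pow,
    abs_of_nonneg hp, abs_of_nonneg (by positivity : (0:ℝ) ≤ (m.factorial:ℝ)),
    Nat.abs_cast]
  have h1 : (m:ℝ) ≤ a + m := by linarith
  have h2 : (0:ℝ) ≤ |x| ^ m := by positivity
  have h3 : (0:ℝ) ≤ poch a m / m.factorial := by positivity
  exact mul_le_mul_of_nonneg_left (mul_le_mul_of_nonneg_right h1 h2) h3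

lemma summable_S2 {a x : ℝ} (ha : 0 < a) (hx : |x| < 1) :
    Summable (fun m : ℕ => poch a m / m.factorial * (m * x ^ (m - 1))) := by
  set r : ℝ := (|x| + 1) / 2 with hrdef
  have hxr : |x| ≤ r := by rw [hrdef]; linarith [abs_nonneg x]
  have hr0 : 0 < r := by rw [hrdef]; linarith [abs_nonneg x]
  have hr1 : |r| < 1 := by rw [abs_of_pos hr0, hrdef]; linarith
  have hsum := (summable_S3 ha hr1).mul_left r⁻¹
  refine Summable.of_norm_bounded hsum fun m => ?_
  have hp := (poch_pos ha m).le
  rw [Real.norm_eq_abs, abs_mul, abs_mul, abs_div, abs_pow,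
    abs_of_nonneg hp, abs_of_nonneg (by positivity : (0:ℝ) ≤ (m.factorial:ℝ)),
    Nat.abs_cast]
  have h3 : (0:ℝ) ≤ poch a m / m.factorial := by positivity
  rw [show r⁻¹ * (poch a m / m.factorial * ((a + m) * r ^ m))
      = poch a m / m.factorial * (r⁻¹ * ((a + m) * r ^ m)) by ring]
  refine mul_le_mul_of_nonneg_left ?_ h3
  cases m with
  | zero => simp; positivity
  | succ n =>
    have hxp : |x| ^ (n + 1 - 1) ≤ r ^ n := by
      simpa using pow_le_pow_left₀ (abs_nonneg x) hxr n
    have step1 : ((n+1:ℕ):ℝ) * |x| ^ (n + 1 - 1) ≤ (n+1:ℕ) * r ^ n :=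
      mul_le_mul_of_nonneg_left hxp (by positivity)
    refine step1.trans ?_
    have h1 : ((n+1:ℕ):ℝ) ≤ a + (n+1:ℕ) := by push_cast; linarith
    have : ((n+1:ℕ):ℝ) * r ^ n ≤ (a + (n+1:ℕ)) * r ^ n :=
      mul_le_mul_of_nonneg_right h1 (by positivity)
    refine this.trans_eq ?_
    have he : r⁻¹ * ((a + ((n+1:ℕ):ℝ)) * r ^ (n+1)) = (a + ((n+1:ℕ):ℝ)) * r ^ n * (r⁻¹ * r) := by
      rw [pow_succ]; ring
    rw [he, inv_mul_cancel₀ hr0.ne', mul_one]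

lemma binom_hasDerivAt {a : ℝ} (ha : 0 < a) {x : ℝ} (hx : |x| < 1) :
    HasDerivAt (fun y : ℝ => ∑' m : ℕ, poch a m / m.factorial * y ^ m)
      (∑' m : ℕ, poch a m / m.factorial * (m * x ^ (m - 1))) x := by
  set r : ℝ := (|x| + 1) / 2 with hrdef
  have hxr : |x| < r := by rw [hrdef]; linarith
  have hr0 : 0 < r := lt_of_le_of_lt (abs_nonneg x) hxr
  have hr1 : |r| < 1 := by rw [abs_of_pos hr0, hrdef]; linarith
  refine hasDerivAt_tsum_of_isPreconnected (summable_S2 ha hr1)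
    Metric.isOpen_ball (Convex.isPreconnected (convex_ball (0:ℝ) r))
    (g' := fun (m : ℕ) (y : ℝ) => poch a m / m.factorial * (m * y ^ (m - 1)))
    (y₀ := 0) (fun m y _ => (hasDerivAt_pow m y).const_mul (poch a m / m.factorial))
    ?_ ?_ ?_ ?_
  · intro m y hy
    rw [Metric.mem_ball, Real.dist_eq, sub_zero] at hy
    rw [Real.norm_eq_abs, abs_mul, abs_mul, Nat.abs_cast, abs_pow,
      abs_of_nonneg (div_nonneg (poch_pos ha m).le (Nat.cast_nonneg _))]
    have h2 : |y| ^ (m-1) ≤ r ^ (m-1) := pow_le_pow_left₀ (abs_nonneg y) hy.le _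
    have : (m:ℝ) * |y| ^ (m-1) ≤ (m:ℝ) * r ^ (m-1) :=
      mul_le_mul_of_nonneg_left h2 (by positivity)
    exact mul_le_mul_of_nonneg_left this (div_nonneg (poch_pos ha m).le (Nat.cast_nonneg _))
  · exact Metric.mem_ball_self hr0
  · exact summable_S1 ha (by simpa using zero_lt_one)
  · rwa [Metric.mem_ball, Real.dist_eq, sub_zero]

lemma binom_ode {a x : ℝ} (ha : 0 < a) (hx : |x| < 1) :
    (1 - x) * (∑' m : ℕ, poch a m / m.factorial * (m * x ^ (m - 1)))
      = a * ∑' m : ℕ, poch a m / m.factorial * x ^ m := by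
  have hshift : ∑' m : ℕ, poch a m / m.factorial * (m * x ^ (m - 1))
      = ∑' m : ℕ, poch a m / m.factorial * ((a + m) * x ^ m) := by
    rw [(summable_S2 ha hx).tsum_eq_zero_add]
    simp only [Nat.cast_zero, zero_mul, mul_zero, zero_add]
    apply tsum_congr
    intro m
    have hfac : ((m+1).factorial : ℝ) = (m+1) * m.factorial := by
      rw [Nat.factorial_succ]; push_cast; ring
    rw [poch_succ, hfac]
    have h1 : (0:ℝ) < (m.factorial:ℝ) := by positivity
    have h2 : (0:ℝ) < (m:ℝ) + 1 := by positivity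
    push_cast
    field_simp
  have hmul : x * (∑' m : ℕ, poch a m / m.factorial * (m * x ^ (m - 1)))
      = ∑' m : ℕ, poch a m / m.factorial * (m * x ^ m) := by
    rw [← tsum_mul_left]
    apply tsum_congr
    intro m
    cases m with
    | zero => simp
    | succ n =>
      rw [Nat.add_sub_cancel, pow_succ]
      push_cast
      ring
  have hsplit : ∑' m : ℕ, poch a m / m.factorial * ((a + m) * x ^ m)
      = a * (∑' m : ℕ, poch a m / m.factorial * x ^ m)
        + ∑' m : ℕ, poch a m / m.factorial * (m * x ^ m) := by
    rw [← tsum_mul_left, ← ((summable_S1 ha hx).mul_left a).tsum_add (summable_S4 ha hx)]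
    apply tsum_congr; intro m; ring
  rw [sub_mul, one_mul, hmul, hshift, hsplit]
  ring

lemma binom_tsum {a : ℝ} (ha : 0 < a) {x : ℝ} (hx0 : 0 ≤ x) (hx : x < 1) :
    ∑' m : ℕ, poch a m / m.factorial * x ^ m = (1 - x) ^ (-a) := by
  set f : ℝ → ℝ := fun y => ∑' m : ℕ, poch a m / m.factorial * y ^ m with hf
  set φ : ℝ → ℝ := fun y => f y * (1 - y) ^ a with hφ
  have key : ∀ y ∈ Set.Icc (0:ℝ) x, y < 1 → HasDerivAt φ 0 y := by
    intro y _ hy1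
    have hyabs : |y| < 1 := by
      rcases Set.mem_Icc.mp ‹y ∈ Set.Icc (0:ℝ) x› with ⟨h0, _⟩
      rw [abs_of_nonneg h0]; exact hy1
    have h1y : (0:ℝ) < 1 - y := by linarith
    have hd1 := binom_hasDerivAt ha hyabs
    have hd2 : HasDerivAt (fun y : ℝ => (1 - y) ^ a) (-1 * a * (1 - y) ^ (a - 1)) y := by
      have := ((hasDerivAt_id y).const_sub 1).rpow_const (p := a) (Or.inl h1y.ne')
      simpa using this
    have hpow : (1 - y) ^ a = (1 - y) ^ (a - 1) * (1 - y) := by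
      rw [show a = (a - 1) + 1 by ring, Real.rpow_add h1y, Real.rpow_one]
      ring_nf
    have hode := binom_ode ha hyabs
    have hzero : (∑' m : ℕ, poch a m / m.factorial * (m * y ^ (m - 1))) * (1 - y) ^ a
        + (∑' m : ℕ, poch a m / m.factorial * y ^ m) * (-1 * a * (1 - y) ^ (a - 1)) = 0 := by
      rw [hpow, show (∑' m : ℕ, poch a m / m.factorial * (m * y ^ (m - 1))) * ((1 - y) ^ (a - 1) * (1 - y))
        + (∑' m : ℕ, poch a m / m.factorial * y ^ m) * (-1 * a * (1 - y) ^ (a - 1))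
        = (1 - y) ^ (a - 1) * ((1 - y) * (∑' m : ℕ, poch a m / m.factorial * (m * y ^ (m - 1)))
            - a * (∑' m : ℕ, poch a m / m.factorial * y ^ m)) by ring, hode, sub_self, mul_zero]
    have h3 := hd1.mul hd2
    rw [hzero] at h3
    exact h3
  have hcont : ContinuousOn φ (Set.Icc 0 x) := by
    intro y hy
    have hy1 : y < 1 := lt_of_le_of_lt (Set.mem_Icc.mp hy).2 hx
    exact ((key y hy hy1).continuousAt).continuousWithinAt
  have hderiv : ∀ y ∈ Set.Ico (0:ℝ) x, HasDerivWithinAt φ 0 (Set.Ici y) y := by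
    intro y hy
    have hy1 : y < 1 := lt_of_lt_of_le (Set.mem_Ico.mp hy).2 hx.le
    exact ((key y (Set.mem_Icc.mpr ⟨(Set.mem_Ico.mp hy).1, (Set.mem_Ico.mp hy).2.le⟩) hy1)).hasDerivWithinAt
  have hconst := constant_of_has_deriv_right_zero hcont hderiv x (Set.mem_Icc.mpr ⟨hx0, le_refl x⟩)
  have hφ0 : φ 0 = 1 := by
    have hf0 : f 0 = 1 := by
      show (∑' m : ℕ, poch a m / m.factorial * (0:ℝ) ^ m) = 1
      rw [tsum_eq_single 0]
      · simp [poch_zero]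
      · intro m hm
        simp [zero_pow hm]
    show f 0 * (1 - (0:ℝ)) ^ a = 1
    rw [hf0]
    norm_num
  have h1x : (0:ℝ) < 1 - x := by linarith
  have : f x * (1 - x) ^ a = 1 := hconst.trans hφ0
  rw [show (∑' m : ℕ, poch a m / m.factorial * x ^ m) = f x from rfl,
    Real.rpow_neg h1x.le]
  exact eq_inv_of_mul_eq_one_left this

lemma beta_aux {p q : ℝ} (hp : 0 < p) (hq : 0 < q) :
    ∀ x ∈ Ioo (0:ℝ) 1, ((x ^ (p-1) * (1-x) ^ (q-1) : ℝ) : ℂ)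
      = (x:ℂ) ^ ((p:ℂ)-1) * (1-(x:ℂ)) ^ ((q:ℂ)-1) := by
  intro x hx
  rw [Complex.ofReal_mul, Complex.ofReal_cpow hx.1.le, Complex.ofReal_cpow (by linarith [hx.2] : (0:ℝ) ≤ 1 - x)]
  push_cast
  ring_nf

lemma beta_integrable {p q : ℝ} (hp : 0 < p) (hq : 0 < q) :
    IntegrableOn (fun t : ℝ => t ^ (p-1) * (1-t) ^ (q-1)) (Ioo 0 1) := by
  have hC : IntegrableOn (fun x : ℝ => (x:ℂ) ^ ((p:ℂ)-1) * (1-(x:ℂ)) ^ ((q:ℂ)-1)) (Ioo 0 1) := by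
    have h := Complex.betaIntegral_convergent (u := (p:ℂ)) (v := (q:ℂ)) (by simpa using hp) (by simpa using hq)
    have h2 := (intervalIntegrable_iff_integrableOn_Ioc_of_le zero_le_one).mp h
    exact h2.mono_set Ioo_subset_Ioc_self
  have hre := hC.re
  refine (integrable_congr ?_).mp hre
  filter_upwards [ae_restrict_mem measurableSet_Ioo] with x hx
  rw [← beta_aux hp hq x hx]
  simp

lemma beta_integral_eq {p q : ℝ} (hp : 0 < p) (hq : 0 < q) :
    ∫ t in Ioo (0:ℝ) 1, t ^ (p-1) * (1-t) ^ (q-1)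
      = Real.Gamma p * Real.Gamma q / Real.Gamma (p+q) := by
  have h := Complex.Gamma_mul_Gamma_eq_betaIntegral (s := (p:ℂ)) (t := (q:ℂ))
    (by simpa using hp) (by simpa using hq)
  have hbeta : Complex.betaIntegral (p:ℂ) (q:ℂ)
      = ((∫ t in Ioo (0:ℝ) 1, t ^ (p-1) * (1-t) ^ (q-1) : ℝ) : ℂ) := by
    rw [Complex.betaIntegral, intervalIntegral.integral_of_le zero_le_one]
    calc ∫ x in Ioc (0:ℝ) 1, (x:ℂ) ^ ((p:ℂ)-1) * (1-(x:ℂ)) ^ ((q:ℂ)-1)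
        = ∫ x in Ioo (0:ℝ) 1, (x:ℂ) ^ ((p:ℂ)-1) * (1-(x:ℂ)) ^ ((q:ℂ)-1) :=
          integral_Ioc_eq_integral_Ioo
      _ = ∫ x in Ioo (0:ℝ) 1, ((x ^ (p-1) * (1-x) ^ (q-1) : ℝ) : ℂ) :=
          setIntegral_congr_fun measurableSet_Ioo fun x hx => (beta_aux hp hq x hx).symm
      _ = ((∫ t in Ioo (0:ℝ) 1, t ^ (p-1) * (1-t) ^ (q-1) : ℝ) : ℂ) := integral_ofReal
  have hΓ : Complex.Gamma ((p:ℂ)+(q:ℂ)) = ((Real.Gamma (p+q) : ℝ) : ℂ) := by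
    rw [show ((p:ℂ)+(q:ℂ)) = ((p+q : ℝ) : ℂ) by push_cast; ring, Complex.Gamma_ofReal]
  rw [hbeta, hΓ, Complex.Gamma_ofReal, Complex.Gamma_ofReal] at h
  have hne : Real.Gamma (p+q) ≠ 0 := (Real.Gamma_pos_of_pos (by linarith)).ne'
  have := congrArg Complex.re h
  simp only [← Complex.ofReal_mul, Complex.ofReal_re] at this
  rw [this]
  field_simp

section Gauss
variable {a b c : ℝ}

theorem gauss_aux (ha : 0 < a) (hb : 0 < b) (hc : 0 < c) (hcab : 0 < c - a - b) :
    Summable (fun m : ℕ => poch a m * poch b m / (poch c m * m.factorial))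
    ∧ ∑' m : ℕ, poch a m * poch b m / (poch c m * m.factorial)
      = Real.Gamma c * Real.Gamma (c-a-b) / (Real.Gamma (c-a) * Real.Gamma (c-b)) := by
  have hcb : 0 < c - b := by linarith
  have hca : 0 < c - a := by linarith
  set U : ℕ → ℝ := fun m => poch a m * poch b m / (poch c m * m.factorial) with hU
  set B : ℝ := Real.Gamma b * Real.Gamma (c-b) / Real.Gamma c with hB
  have hΓc := Real.Gamma_pos_of_pos hc
  have hΓb := Real.Gamma_pos_of_pos hb
  have hΓcb := Real.Gamma_pos_of_pos hcb
  have hΓca := Real.Gamma_pos_of_pos hca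
  have hΓcab := Real.Gamma_pos_of_pos hcab
  have hBpos : 0 < B := by rw [hB]; positivity
  set g : ℕ → ℝ → ℝ := fun m t => poch a m / m.factorial * t ^ m * (t ^ (b-1) * (1-t) ^ (c-b-1))
    with hg
  have hUpos : ∀ m, 0 < U m := fun m => by
    rw [hU]
    have := poch_pos ha m; have := poch_pos hb m; have := poch_pos hc m
    have : (0:ℝ) < m.factorial := by positivity
    positivity
  -- each g m equals the (b+m, c-b) beta integrand on Ioo, up to constant
  have hgeq : ∀ m : ℕ, ∀ t ∈ Ioo (0:ℝ) 1, g m t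
      = poch a m / m.factorial * (t ^ ((b+m)-1) * (1-t) ^ ((c-b)-1)) := by
    intro m t ht
    rw [hg]
    have ht0 : 0 < t := ht.1
    rw [show ((b+m)-1 : ℝ) = (b-1) + m by ring, Real.rpow_add ht0, Real.rpow_natCast]
    ring
  have hgint : ∀ m : ℕ, IntegrableOn (g m) (Ioo 0 1) := by
    intro m
    have h := (beta_integrable (p := b+m) (q := c-b) (by positivity) hcb).const_mul
      (poch a m / m.factorial)
    exact (integrable_congr ((ae_restrict_mem measurableSet_Ioo).mono
      fun t ht => (hgeq m t ht).symm)).mp h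
  have hgnn : ∀ m : ℕ, ∀ t ∈ Ioo (0:ℝ) 1, 0 ≤ g m t := by
    intro m t ht
    have h1 : (0:ℝ) < t := ht.1
    have h2 : (0:ℝ) < 1 - t := by linarith [ht.2]
    have hp := (poch_pos ha m).le
    rw [hg]
    have : (0:ℝ) < m.factorial := by positivity
    positivity
  have hgval : ∀ m : ℕ, ∫ t in Ioo (0:ℝ) 1, g m t = U m * B := by
    intro m
    rw [setIntegral_congr_fun measurableSet_Ioo (hgeq m), integral_const_mul,
      beta_integral_eq (by positivity) hcb]
    rw [show b + (m:ℝ) + (c - b) = c + m by ring]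
    rw [show b + (m:ℝ) = b + (m:ℕ) by norm_num, Gamma_add_nat hb m,
      show c + (m:ℝ) = c + (m:ℕ) by norm_num, Gamma_add_nat hc m]
    rw [hU, hB]
    have h1 := (poch_pos hc m).ne'
    have h2 := hΓc.ne'
    have h3 : ((m.factorial : ℝ)) ≠ 0 := by positivity
    field_simp
  -- pointwise sum
  have hptsum : ∀ t ∈ Ioo (0:ℝ) 1,
      (∑' m : ℕ, g m t) = t ^ (b-1) * (1-t) ^ ((c-a-b)-1) := by
    intro t ht
    have habs : |t| < 1 := by rw [abs_of_pos ht.1]; exact ht.2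
    have h1t : (0:ℝ) < 1 - t := by linarith [ht.2]
    rw [hg]
    rw [tsum_mul_right, binom_tsum ha ht.1.le ht.2]
    rw [show ((c-a-b)-1 : ℝ) = -a + (c-b-1) by ring, Real.rpow_add h1t]
    ring
  have hptsummable : ∀ t ∈ Ioo (0:ℝ) 1, Summable (fun m => g m t) := by
    intro t ht
    have habs : |t| < 1 := by rw [abs_of_pos ht.1]; exact ht.2
    exact (summable_S1 ha habs).mul_right _
  -- main ENNReal chain
  have main : ∑' m : ℕ, ENNReal.ofReal (U m * B)
      = ENNReal.ofReal (Real.Gamma b * Real.Gamma (c-a-b) / Real.Gamma (c-a)) := by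
    have e1 : ∀ m : ℕ, ENNReal.ofReal (U m * B)
        = ∫⁻ t in Ioo (0:ℝ) 1, ENNReal.ofReal (g m t) := by
      intro m
      rw [← hgval m]
      exact ofReal_integral_eq_lintegral_ofReal (hgint m)
        ((ae_restrict_mem measurableSet_Ioo).mono (hgnn m))
    calc ∑' m : ℕ, ENNReal.ofReal (U m * B)
        = ∑' m : ℕ, ∫⁻ t in Ioo (0:ℝ) 1, ENNReal.ofReal (g m t) := tsum_congr e1
      _ = ∫⁻ t in Ioo (0:ℝ) 1, ∑' m : ℕ, ENNReal.ofReal (g m t) :=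
          (lintegral_tsum fun m => ((hgint m).aemeasurable).ennreal_ofReal).symm
      _ = ∫⁻ t in Ioo (0:ℝ) 1, ENNReal.ofReal (t ^ (b-1) * (1-t) ^ ((c-a-b)-1)) := by
          refine lintegral_congr_ae (((ae_restrict_mem measurableSet_Ioo)).mono fun t ht => ?_)
          show (∑' m : ℕ, ENNReal.ofReal (g m t))
            = ENNReal.ofReal (t ^ (b-1) * (1-t) ^ ((c-a-b)-1))
          have hh := (ENNReal.ofReal_tsum_of_nonneg (f := fun m => g m t)
            (fun m => hgnn m t ht) (hptsummable t ht)).symm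
          rw [hh, hptsum t ht]
      _ = ENNReal.ofReal (∫ t in Ioo (0:ℝ) 1, t ^ (b-1) * (1-t) ^ ((c-a-b)-1)) := by
          refine (ofReal_integral_eq_lintegral_ofReal (beta_integrable hb hcab)
            (((ae_restrict_mem measurableSet_Ioo)).mono fun t ht => ?_)).symm
          have h1 : (0:ℝ) < t := ht.1
          have h2 : (0:ℝ) < 1 - t := by linarith [ht.2]
          positivity
      _ = ENNReal.ofReal (Real.Gamma b * Real.Gamma (c-a-b) / Real.Gamma (c-a)) := by
          rw [beta_integral_eq hb hcab, show b + (c-a-b) = c-a by ring]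
  -- extract summability and value
  have hne : ∀ m : ℕ, ENNReal.ofReal (U m * B) ≠ ⊤ := fun m => ENNReal.ofReal_ne_top
  have htop : ∑' m : ℕ, ENNReal.ofReal (U m * B) ≠ ⊤ := by
    rw [main]; exact ENNReal.ofReal_ne_top
  have hsummB : Summable (fun m => U m * B) := by
    have := ENNReal.summable_toReal htop
    refine this.congr fun m => ?_
    rw [ENNReal.toReal_ofReal (mul_nonneg (hUpos m).le hBpos.le)]
  have hsumval : ∑' m : ℕ, (U m * B) = Real.Gamma b * Real.Gamma (c-a-b) / Real.Gamma (c-a) := by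
    have h1 := congrArg ENNReal.toReal main
    rw [ENNReal.tsum_toReal_eq hne] at h1
    rw [ENNReal.toReal_ofReal (by positivity)] at h1
    rw [← h1]
    exact tsum_congr fun m => (ENNReal.toReal_ofReal (mul_nonneg (hUpos m).le hBpos.le)).symm
  have hsummU : Summable U := by
    have := hsummB.mul_right B⁻¹
    refine this.congr fun m => ?_
    field_simp
  constructor
  · exact hsummU
  · have := hsumval
    rw [tsum_mul_right] at this
    have hUval : ∑' m, U m = Real.Gamma b * Real.Gamma (c-a-b) / Real.Gamma (c-a) / B := by
      rw [← this]; field_simp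
    rw [hUval, hB]
    field_simp
end Gauss

end Helpers

/-- `(ab/(α+1))·₃F₂(a+1,b+1,1; α+2,2; 1) = (1/(α+1))·Γ(α+2)Γ(α−a−b+1)/(Γ(α−a+1)Γ(α−b+1)) − 1`. -/
theorem stmt14 (a b α : ℝ) (ha : 0 < a) (hb : 0 < b)
    (hab : a + b < 1 + min a b) (hα : α + 1 > 0) (hconv : α + 1 - a - b > 0)
    (h1 : NotNonposInt (α + 2)) (h2 : NotNonposInt (α - a - b + 1))
    (h3 : NotNonposInt (α - a + 1)) (h4 : NotNonposInt (α - b + 1)) :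
    (a * b / (α + 1)) * F32 (a + 1) (b + 1) 1 (α + 2) 2 1
      = (1 / (α + 1)) * Real.Gamma (α + 2) * Real.Gamma (α - a - b + 1) /
          (Real.Gamma (α - a + 1) * Real.Gamma (α - b + 1)) - 1 := by
  set c : ℝ := α + 1 with hc
  have hc0 : 0 < c := hα
  have hcab : 0 < c - a - b := hconv
  obtain ⟨hsummU, hval⟩ := gauss_aux ha hb hc0 hcab
  set U : ℕ → ℝ := fun m => poch a m * poch b m / (poch c m * m.factorial) with hU
  have hterm : ∀ n : ℕ, (a * b / (α + 1)) *
      ((poch (a+1) n * poch (b+1) n * poch 1 n) / (poch (α+2) n * poch 2 n * (n.factorial : ℝ)) * 1 ^ n)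
      = U (n + 1) := by
    intro n
    rw [one_pow, mul_one, poch_one, poch_two, hU]
    show a * b / (α + 1) * (poch (a+1) n * poch (b+1) n * n.factorial /
        (poch (α+2) n * (n+1).factorial * n.factorial))
      = poch a (n+1) * poch b (n+1) / (poch c (n+1) * (n+1).factorial)
    rw [poch_succ_left a n, poch_succ_left b n, hc, poch_succ_left (α+1) n,
      show (α + 1 + 1 : ℝ) = α + 2 by ring]
    have e1 : (0:ℝ) < poch (α+2) n := poch_pos (by linarith) n
    have e2 : (0:ℝ) < ((n+1).factorial : ℝ) := by positivity
    have e3 : (0:ℝ) < ((n).factorial : ℝ) := by positivity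
    field_simp
  have hsumshift : Summable (fun n : ℕ => U (n + 1)) := by
    rw [← summable_nat_add_iff 1] at hsummU
    exact hsummU
  have hU0 : U 0 = 1 := by
    rw [hU]
    show poch a 0 * poch b 0 / (poch c 0 * (Nat.factorial 0 : ℝ)) = 1
    rw [poch_zero, poch_zero, poch_zero]
    norm_num
  have hF : F32 (a + 1) (b + 1) 1 (α + 2) 2 1
      = ∑' n : ℕ, (poch (a+1) n * poch (b+1) n * poch 1 n) /
          (poch (α+2) n * poch 2 n * (n.factorial : ℝ)) * 1 ^ n := rfl
  have hk : (a * b / (α + 1)) ≠ 0 := by positivity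
  have hLHS : (a * b / (α + 1)) * F32 (a + 1) (b + 1) 1 (α + 2) 2 1
      = (∑' m : ℕ, U m) - 1 := by
    rw [hF, ← tsum_mul_left]
    rw [tsum_congr hterm]
    rw [hsummU.tsum_eq_zero_add, hU0]
    ring
  rw [hLHS, hval]
  have hΓ2 : Real.Gamma (α + 2) = (α + 1) * Real.Gamma (α + 1) := by
    rw [show (α + 2 : ℝ) = (α + 1) + 1 by ring, Real.Gamma_add_one (by linarith)]
  rw [hΓ2, hc,
    show c - a - b = α - a - b + 1 by rw [hc]; ring,
    show c - a = α - a + 1 by rw [hc]; ring,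
    show c - b = α - b + 1 by rw [hc]; ring]
  rw [show (1 / (α + 1) * ((α + 1) * Real.Gamma (α + 1))) = Real.Gamma (α + 1) by
    field_simp
    exact mul_div_cancel_left₀ _ (ne_of_gt (by linarith : (0:ℝ) < α + 1))]
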